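/- The group of order automorphisms of ℝ × ℝ with the product order is isomorphic to the semidirect product (Hom≤(ℝ) × Hom≤(ℝ)) ⋊ S₂, where Hom≤(ℝ) is the group of increasing homeomorphisms of ℝ and S₂ acts by swapping the two factors. -/

import Mathlib

/-- The action of `S₂` on `Hom≤(ℝ) × Hom≤(ℝ)` (realized as `Fin 2 → (ℝ ≃o ℝ)`,
where `ℝ ≃o ℝ` is the group of increasing homeomorphisms of ℝ) permuting the
two factors. -/
def swapAction : Equiv.Perm (Fin 2) →* MulAut (Fin 2 → (ℝ ≃o ℝ)) where
  toFun σ :=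
    { toFun := fun v => v ∘ σ.symm
      invFun := fun v => v ∘ σ
      left_inv := fun v => by ext i : 1; simp
      right_inv := fun v => by ext i : 1; simp
      map_mul' := fun v w => rfl }
  map_one' := by ext v i; rfl
  map_mul' := fun σ τ => by ext v i; simp [Equiv.Perm.mul_def]


section aux

/-- alignment: same column or same row -/
def Aligned (p q : ℝ × ℝ) : Prop := p.1 = q.1 ∨ p.2 = q.2

lemma chain_iff (p q : ℝ × ℝ) :
    (∀ r s : ℝ × ℝ, p ⊓ q ≤ r → r ≤ p ⊔ q → p ⊓ q ≤ s → s ≤ p ⊔ q → (r ≤ s ∨ s ≤ r)) ↔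
      Aligned p q := by
  constructor
  · intro h
    by_contra hal
    rw [Aligned, not_or] at hal
    obtain ⟨h1, h2⟩ := hal
    have hx : min p.1 q.1 < max p.1 q.1 := min_lt_max.2 h1
    have hy : min p.2 q.2 < max p.2 q.2 := min_lt_max.2 h2
    have := h (min p.1 q.1, max p.2 q.2) (max p.1 q.1, min p.2 q.2)
      (by simp [Prod.le_def, inf_le_left, le_max_left, Prod.inf_def, Prod.sup_def])
      (by simp [Prod.le_def, Prod.inf_def, Prod.sup_def, hx.le])
      (by simp [Prod.le_def, Prod.inf_def, Prod.sup_def, hy.le])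
      (by simp [Prod.le_def, Prod.inf_def, Prod.sup_def])
    rcases this with h' | h'
    · exact absurd (hy.trans_le h'.2) (lt_irrefl _)
    · exact absurd (hx.trans_le h'.1) (lt_irrefl _)
  · rintro (h | h) r s hr1 hr2 hs1 hs2 <;>
      rw [Prod.le_def] at hr1 hr2 hs1 hs2 <;>
      simp [Prod.inf_def, Prod.sup_def, h] at hr1 hr2 hs1 hs2
    · have hr : r.1 = q.1 := le_antisymm (by simpa [h] using hr2.1) (by simpa [h] using hr1.1)
      have hs : s.1 = q.1 := le_antisymm (by simpa [h] using hs2.1) (by simpa [h] using hs1.1)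
      rcases le_total r.2 s.2 with h' | h'
      · exact Or.inl ⟨by rw [hr, hs], h'⟩
      · exact Or.inr ⟨by rw [hr, hs], h'⟩
    · have hr : r.2 = q.2 := le_antisymm (by simpa [h] using hr2.2) (by simpa [h] using hr1.2)
      have hs : s.2 = q.2 := le_antisymm (by simpa [h] using hs2.2) (by simpa [h] using hs1.2)
      rcases le_total r.1 s.1 with h' | h'
      · exact Or.inl ⟨h', by rw [hr, hs]⟩
      · exact Or.inr ⟨h', by rw [hr, hs]⟩

lemma aligned_map (G : (ℝ × ℝ) ≃o (ℝ × ℝ)) {p q : ℝ × ℝ} (h : Aligned p q) :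
    Aligned (G p) (G q) := by
  rw [← chain_iff] at h ⊢
  intro r s hr1 hr2 hs1 hs2
  have e1 : G p ⊓ G q = G (p ⊓ q) := (OrderIso.map_inf G p q).symm
  have e2 : G p ⊔ G q = G (p ⊔ q) := (map_sup G p q).symm
  rw [e1] at hr1 hs1; rw [e2] at hr2 hs2
  have := h (G.symm r) (G.symm s)
    (by simpa using G.symm.monotone hr1) (by simpa using G.symm.monotone hr2)
    (by simpa using G.symm.monotone hs1) (by simpa using G.symm.monotone hs2)
  rcases this with h' | h'
  · exact Or.inl (by simpa using G.monotone h')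
  · exact Or.inr (by simpa using G.monotone h')

lemma aligned_iff (G : (ℝ × ℝ) ≃o (ℝ × ℝ)) (p q : ℝ × ℝ) :
    Aligned (G p) (G q) ↔ Aligned p q := by
  constructor
  · intro h
    have := aligned_map G.symm h
    simpa using this
  · exact aligned_map G

end aux

section main
variable (G : (ℝ × ℝ) ≃o (ℝ × ℝ)) (h0 : (G (0, 0)).1 = (G (0, 1)).1)

include h0 in
lemma col_zero : ∀ y : ℝ, (G (0, y)).1 = (G (0, 0)).1 := by
  intro y
  have a1 : Aligned (G (0, y)) (G (0, 0)) := aligned_map G (Or.inl rfl)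
  have a2 : Aligned (G (0, y)) (G (0, 1)) := aligned_map G (Or.inl rfl)
  rcases a1 with h | h
  · exact h
  rcases a2 with h' | h'
  · rw [h', ← h0]
  · exfalso
    have : G (0, 0) = G (0, 1) := Prod.ext h0 (h ▸ h')
    have := G.injective this
    simpa using congrArg Prod.snd this

include h0 in
lemma rows : ∀ x b : ℝ, (G (x, b)).2 = (G (0, b)).2 := by
  intro x b
  by_cases hx : x = 0
  · rw [hx]
  by_contra hne
  have hcol : (G (x, b)).1 = (G (0, b)).1 := by
    rcases aligned_map G (p := (x, b)) (q := (0, b)) (Or.inr rfl) with h | h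
    · exact h
    · exact absurd h hne
  have h1 : (G (x, b)).1 = (G (0, b + 1)).1 := by
    rw [hcol, col_zero G h0 b, ← col_zero G h0 (b + 1)]
  have : Aligned (x, b) (0, b + 1) := (aligned_iff G _ _).1 (Or.inl h1)
  rcases this with h | h
  · exact hx h
  · simp at h

include h0 in
lemma cols : ∀ x y y' : ℝ, (G (x, y)).1 = (G (x, y')).1 := by
  intro x y y'
  rcases aligned_map G (p := (x, y)) (q := (x, y')) (Or.inl rfl) with h | h
  · exact h
  · rw [rows G h0 x y, rows G h0 x y'] at h
    have : G (0, y) = G (0, y') := Prod.ext (by rw [col_zero G h0 y, col_zero G h0 y']) h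
    have : y = y' := by simpa using congrArg Prod.snd (G.injective this)
    rw [this]

include h0 in
lemma exists_prod : ∃ f g : ℝ ≃o ℝ, ∀ p : ℝ × ℝ, G p = (f p.1, g p.2) := by
  set f : ℝ → ℝ := fun x => (G (x, 0)).1 with hf
  set g : ℝ → ℝ := fun y => (G (0, y)).2 with hg
  have hGp : ∀ p : ℝ × ℝ, G p = (f p.1, g p.2) := by
    rintro ⟨x, y⟩
    exact Prod.ext (cols G h0 x y 0) (rows G h0 x y)
  have hle : ∀ x x', f x ≤ f x' ↔ x ≤ x' := by
    intro x x'
    have : G (x, 0) ≤ G (x', 0) ↔ ((x : ℝ), (0 : ℝ)) ≤ (x', 0) := G.le_iff_le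
    rw [hGp (x, 0), hGp (x', 0), Prod.mk_le_mk, Prod.mk_le_mk] at this
    simpa using this
  have hgle : ∀ y y', g y ≤ g y' ↔ y ≤ y' := by
    intro y y'
    have : G (0, y) ≤ G (0, y') ↔ ((0 : ℝ), y) ≤ (0, y') := G.le_iff_le
    rw [hGp (0, y), hGp (0, y'), Prod.mk_le_mk, Prod.mk_le_mk] at this
    simpa using this
  have hfm : StrictMono f := fun x x' h =>
    lt_of_le_of_ne ((hle x x').2 h.le) fun he =>
      absurd ((hle x' x).1 he.ge) (not_le.2 h)
  have hgm : StrictMono g := fun y y' h =>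
    lt_of_le_of_ne ((hgle y y').2 h.le) fun he =>
      absurd ((hgle y' y).1 he.ge) (not_le.2 h)
  have hfs : Function.Surjective f := by
    intro u
    refine ⟨(G.symm (u, g 0)).1, ?_⟩
    have : G (G.symm (u, g 0)) = (u, g 0) := G.apply_symm_apply _
    rw [hGp] at this
    simpa using congrArg Prod.fst this
  have hgs : Function.Surjective g := by
    intro u
    refine ⟨(G.symm (f 0, u)).2, ?_⟩
    have : G (G.symm (f 0, u)) = (f 0, u) := G.apply_symm_apply _
    rw [hGp] at this
    simpa using congrArg Prod.snd this
  exact ⟨StrictMono.orderIsoOfSurjective f hfm hfs,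
    StrictMono.orderIsoOfSurjective g hgm hgs, hGp⟩

end main

/-- product of two order isos of ℝ -/
def prodIso (f g : ℝ ≃o ℝ) : (ℝ × ℝ) ≃o (ℝ × ℝ) where
  toEquiv := Equiv.prodCongr f.toEquiv g.toEquiv
  map_rel_iff' := by
    rintro ⟨a, b⟩ ⟨c, d⟩
    simp [Prod.le_def, f.le_iff_le, g.le_iff_le]

def A : (Fin 2 → (ℝ ≃o ℝ)) →* ((ℝ × ℝ) ≃o (ℝ × ℝ)) where
  toFun v := prodIso (v 0) (v 1)
  map_one' := OrderIso.ext rfl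
  map_mul' v w := OrderIso.ext rfl

lemma perm_two : ∀ σ : Equiv.Perm (Fin 2), σ = 1 ∨ σ = Equiv.swap 0 1 := by decide

def P : Equiv.Perm (Fin 2) →* ((ℝ × ℝ) ≃o (ℝ × ℝ)) where
  toFun σ := if σ = 1 then 1 else OrderIso.prodComm
  map_one' := by simp
  map_mul' σ τ := by
    rcases perm_two σ with h | h <;> rcases perm_two τ with h' | h' <;>
      subst h <;> subst h' <;> simp <;>
      first
        | rfl
        | (rw [if_neg (by decide), if_pos (by decide)]; exact OrderIso.ext rfl)

lemma compat : ∀ σ, A.comp (swapAction σ).toMonoidHom =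
    (MulAut.conj (P σ)).toMonoidHom.comp A := by
  intro σ
  ext v : 1
  rcases perm_two σ with h | h <;> subst h
  · simp [P]
  · show A (v ∘ (Equiv.swap 0 1).symm) = P (Equiv.swap 0 1) * A v * (P (Equiv.swap 0 1))⁻¹
    have hP : P (Equiv.swap 0 1) = OrderIso.prodComm := by
      simp [P]
    rw [hP]
    exact OrderIso.ext rfl

theorem stmt_15 :
    Nonempty
      (((ℝ × ℝ) ≃o (ℝ × ℝ)) ≃*
        (Fin 2 → (ℝ ≃o ℝ)) ⋊[swapAction] Equiv.Perm (Fin 2)) := by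
  let φ := SemidirectProduct.lift A P compat
  have hφ : ∀ v σ, φ ⟨v, σ⟩ = A v * P σ := fun v σ => rfl
  have hinj : Function.Injective φ := by
    rw [injective_iff_map_eq_one]
    rintro ⟨v, σ⟩ h
    rw [hφ] at h
    have hval : ∀ p : ℝ × ℝ, (A v) ((P σ) p) = p := by
      intro p
      have := congrArg (fun e : (ℝ × ℝ) ≃o (ℝ × ℝ) => e p) h
      simpa [RelIso.mul_apply] using this
    rcases perm_two σ with hσ | hσ
    · subst hσ
      have hP1 : ∀ p : ℝ × ℝ, (P 1) p = p := fun p => by simp [P]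
      have hv0 : v 0 = 1 := by
        refine OrderIso.ext (funext fun x => ?_)
        have := hval (x, 0)
        rw [hP1] at this
        exact congrArg Prod.fst this
      have hv1 : v 1 = 1 := by
        refine OrderIso.ext (funext fun y => ?_)
        have := hval (0, y)
        rw [hP1] at this
        exact congrArg Prod.snd this
      have hv : v = 1 := by
        funext i
        fin_cases i
        · exact hv0
        · exact hv1
      rw [hv]; rfl
    · subst hσ
      exfalso
      have hPs : ∀ p : ℝ × ℝ, (P (Equiv.swap 0 1)) p = p.swap := fun p => by
        simp [P]
      have h1 : (v 0) 1 = 0 := by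
        have := hval ((0 : ℝ), (1 : ℝ))
        rw [hPs] at this
        exact congrArg Prod.fst this
      have h2 : (v 0) 0 = 1 := by
        have := hval ((1 : ℝ), (0 : ℝ))
        rw [hPs] at this
        exact congrArg Prod.fst this
      have := (v 0).strictMono (zero_lt_one' ℝ)
      rw [h1, h2] at this
      exact absurd this (by norm_num)
  have hsurj : Function.Surjective φ := by
    intro G
    by_cases h0 : (G (0, 0)).1 = (G (0, 1)).1
    · obtain ⟨f, g, hfg⟩ := exists_prod G h0
      refine ⟨⟨![f, g], 1⟩, ?_⟩
      rw [hφ]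
      refine OrderIso.ext (funext fun p => ?_)
      show (A ![f, g]) ((P 1) p) = G p
      rw [show (P 1) p = p from by simp [P], hfg p]
      rfl
    · have hAl : (G (0, 0)).2 = (G (0, 1)).2 := by
        rcases aligned_map G (p := ((0 : ℝ), (0 : ℝ))) (q := (0, 1)) (Or.inl rfl) with h | h
        · exact absurd h h0
        · exact h
      have h0' : ((G.trans OrderIso.prodComm) (0, 0)).1 =
          ((G.trans OrderIso.prodComm) (0, 1)).1 := hAl
      obtain ⟨f, g, hfg⟩ := exists_prod (G.trans OrderIso.prodComm) h0'
      refine ⟨⟨![g, f], Equiv.swap 0 1⟩, ?_⟩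
      rw [hφ]
      refine OrderIso.ext (funext fun p => ?_)
      show (A ![g, f]) ((P (Equiv.swap 0 1)) p) = G p
      rw [show (P (Equiv.swap 0 1)) p = p.swap from by simp [P]]
      have hGp : G p = (g p.2, f p.1) := by
        have h2 := congrArg Prod.swap (hfg p)
        simpa using h2
      rw [hGp]
      rfl
  exact ⟨(MulEquiv.ofBijective φ ⟨hinj, hsurj⟩).symm⟩
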